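/- Let E be a Euclidean space, N₀ ≥ 1 a real number, and φ : ℝ × E → E a flow such that for every p ∈ E the map t ↦ φ(t, p) is differentiable and satisfies: whenever ‖φ(t,p)‖ ≥ N₀, the derivative of t ↦ ‖φ(t,p)‖² equals −2‖φ(t,p)‖². Then for every p with ‖p‖ ≤ N₀ + 1, one has ‖φ(1, p)‖ ≤ N₀; in particular φ(1, ·) maps the closed ball of radius N₀ + 1 centered at the origin into the closed ball of radius N₀. -/

import Mathlib

/-- If the squared norm along the flow satisfies `(d/dt)‖φ(t,p)‖² = -2‖φ(t,p)‖²` whenever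
`‖φ(t,p)‖ ≥ N₀` (with `N₀ ≥ 1`), then the time-one map takes the closed ball of radius
`N₀ + 1` into the closed ball of radius `N₀`. -/
theorem time_one_map_into_ball
    {E : Type*} [NormedAddCommGroup E] [InnerProductSpace ℝ E] [FiniteDimensional ℝ E]
    (N₀ : ℝ) (hN₀ : 1 ≤ N₀)
    (φ : ℝ → E → E)
    (hid : ∀ x : E, φ 0 x = x)
    (hgroup : ∀ (s t : ℝ) (x : E), φ (s + t) x = φ s (φ t x))
    (hdiff : ∀ p : E, Differentiable ℝ (fun t : ℝ => φ t p))
    (hderiv : ∀ (p : E) (t : ℝ), N₀ ≤ ‖φ t p‖ →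
      HasDerivAt (fun s : ℝ => ‖φ s p‖ ^ 2) (-2 * ‖φ t p‖ ^ 2) t) :
    ∀ p : E, ‖p‖ ≤ N₀ + 1 → ‖φ 1 p‖ ≤ N₀ := by
  intro p hp
  by_contra hcon
  push_neg at hcon
  have hcontφ : Continuous (fun t : ℝ => ‖φ t p‖) := (hdiff p).continuous.norm
  have hcontf : Continuous (fun t : ℝ => ‖φ t p‖ ^ 2) := hcontφ.pow 2
  -- auxiliary function g t = f t * exp (2t) is constant on any interval where ‖φ t p‖ ≥ N₀
  have key : ∀ a b : ℝ, a ≤ b → (∀ t ∈ Set.Icc a b, N₀ ≤ ‖φ t p‖) →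
      ‖φ b p‖ ^ 2 * Real.exp (2 * b) = ‖φ a p‖ ^ 2 * Real.exp (2 * a) := by
    intro a b hab hge
    set g : ℝ → ℝ := fun t => ‖φ t p‖ ^ 2 * Real.exp (2 * t) with hg
    have hgcont : Continuous g := hcontf.mul (Real.continuous_exp.comp (continuous_const.mul continuous_id))
    have hgd : ∀ t ∈ Set.Ico a b, HasDerivWithinAt g 0 (Set.Ici t) t := by
      intro t ht
      have h1 : HasDerivAt (fun s : ℝ => ‖φ s p‖ ^ 2) (-2 * ‖φ t p‖ ^ 2) t :=
        hderiv p t (hge t ⟨ht.1, ht.2.le⟩)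
      have h2 : HasDerivAt (fun s : ℝ => Real.exp (2 * s)) (Real.exp (2 * t) * 2) t :=
        by simpa using ((hasDerivAt_id t).const_mul 2).exp
      have h3 := h1.mul h2
      have h4 : (-2 * ‖φ t p‖ ^ 2) * Real.exp (2 * t) + ‖φ t p‖ ^ 2 * (Real.exp (2 * t) * 2) = 0 := by
        ring
      rw [h4] at h3
      exact h3.hasDerivWithinAt
    have := constant_of_has_deriv_right_zero (hgcont.continuousOn) hgd b ⟨hab, le_refl b⟩
    exact this
  -- the set of times in [0,1] where the norm is ≤ N₀
  set S : Set ℝ := {t | t ∈ Set.Icc (0:ℝ) 1 ∧ ‖φ t p‖ ≤ N₀} with hS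
  have hexp2 : (4:ℝ) < Real.exp 2 := by
    have h := Real.exp_one_gt_d9
    have : Real.exp 2 = Real.exp 1 * Real.exp 1 := by
      rw [← Real.exp_add]; norm_num
    nlinarith [Real.exp_pos 1]
  have hN₀pos : (0:ℝ) < N₀ := lt_of_lt_of_le one_pos hN₀
  by_cases hSe : S = ∅
  · -- norm stays ≥ N₀ on all of [0,1]
    have hge : ∀ t ∈ Set.Icc (0:ℝ) 1, N₀ ≤ ‖φ t p‖ := by
      intro t ht
      by_contra hlt
      push_neg at hlt
      exact absurd (⟨ht, hlt.le⟩ : t ∈ S) (by show t ∉ S; rw [hSe]; simp)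
    have h := key 0 1 zero_le_one hge
    have h0 : ‖φ 0 p‖ ^ 2 ≤ (N₀ + 1) ^ 2 := by
      rw [hid]
      exact pow_le_pow_left₀ (norm_nonneg p) hp 2
    have h1 : N₀ ^ 2 < ‖φ 1 p‖ ^ 2 := by
      apply pow_lt_pow_left₀ hcon hN₀pos.le
      norm_num
    rw [mul_zero, Real.exp_zero, mul_one] at h
    nlinarith [Real.exp_pos (2 * (1:ℝ))]
  · -- let t₀ be the last time the norm is ≤ N₀
    have hSne : S.Nonempty := Set.nonempty_iff_ne_empty.mpr hSe
    have hSclosed : IsClosed S := by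
      have : S = Set.Icc (0:ℝ) 1 ∩ (fun t => ‖φ t p‖) ⁻¹' Set.Iic N₀ := by
        ext t
        simp only [hS, Set.mem_setOf_eq, Set.mem_inter_iff, Set.mem_preimage, Set.mem_Iic]
      rw [this]
      exact isClosed_Icc.inter (IsClosed.preimage hcontφ isClosed_Iic)
    have hScomp : IsCompact S := by
      apply (isCompact_Icc : IsCompact (Set.Icc (0:ℝ) 1)).of_isClosed_subset hSclosed
      intro t ht; exact ht.1
    obtain ⟨t₀, ht₀S, ht₀ub⟩ := hScomp.exists_isGreatest hSne
    have ht₀mem : t₀ ∈ Set.Icc (0:ℝ) 1 := ht₀S.1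
    have ht₀lt1 : t₀ < 1 := by
      rcases lt_or_eq_of_le ht₀mem.2 with h | h
      · exact h
      · exfalso
        have := ht₀S.2
        rw [h] at this
        exact absurd this (not_le.mpr hcon)
    -- for t ∈ (t₀, 1], the norm exceeds N₀
    have hgt : ∀ t ∈ Set.Ioc t₀ 1, N₀ < ‖φ t p‖ := by
      intro t ht
      by_contra hle
      push_neg at hle
      have htS : t ∈ S := ⟨⟨le_trans ht₀mem.1 ht.1.le, ht.2⟩, hle⟩
      exact absurd (ht₀ub htS) (not_le.mpr ht.1)
    -- by continuity the norm at t₀ is ≥ N₀ (hence = N₀)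
    have hnormt₀ : N₀ ≤ ‖φ t₀ p‖ := by
      have htend : Filter.Tendsto (fun t => ‖φ t p‖) (nhdsWithin t₀ (Set.Ioi t₀)) (nhds ‖φ t₀ p‖) :=
        (hcontφ.continuousAt).continuousWithinAt.tendsto
      refine ge_of_tendsto htend ?_
      filter_upwards [Ioc_mem_nhdsGT_of_mem ⟨le_refl t₀, ht₀lt1⟩] with t ht
      exact (hgt t ht).le
    have hge : ∀ t ∈ Set.Icc t₀ 1, N₀ ≤ ‖φ t p‖ := by
      intro t ht
      rcases eq_or_lt_of_le ht.1 with h | h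
      · rw [← h]; exact hnormt₀
      · exact (hgt t ⟨h, ht.2⟩).le
    have h := key t₀ 1 ht₀lt1.le hge
    have heq : ‖φ t₀ p‖ = N₀ := le_antisymm ht₀S.2 hnormt₀
    have h1 : N₀ ^ 2 < ‖φ 1 p‖ ^ 2 := by
      apply pow_lt_pow_left₀ hcon hN₀pos.le
      norm_num
    rw [heq] at h
    have hexple : Real.exp (2 * t₀) ≤ Real.exp (2 * 1) :=
      Real.exp_le_exp.mpr (by linarith)
    nlinarith [Real.exp_pos (2 * (1:ℝ)), Real.exp_pos (2 * t₀), sq_nonneg N₀]
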